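/- Let A, B be finite algebras in a Taylor variety, R a subdirect subalgebra of A × B, and E an absorbing subalgebra of R. If R is linked then E is linked. -/

import Mathlib

structure Signature : Type 1 where
  symbols : Type
  arity : symbols → ℕ

structure UAlgebra (σ : Signature) : Type 1 where
  carrier : Type
  op : ∀ s : σ.symbols, (Fin (σ.arity s) → carrier) → carrier

inductive Term (σ : Signature) (n : ℕ) : Type
  | var : Fin n → Term σ n
  | app (s : σ.symbols) : (Fin (σ.arity s) → Term σ n) → Term σ n

def Term.eval {σ : Signature} (A : UAlgebra σ) {n : ℕ} :
    Term σ n → (Fin n → A.carrier) → A.carrier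
  | .var i, x => x i
  | .app s ts, x => A.op s fun j => Term.eval A (ts j) x

/-- `B` is a subuniverse of the algebra `A`. -/
def Subuniverse {σ : Signature} (A : UAlgebra σ) (B : Set A.carrier) : Prop :=
  ∀ (s : σ.symbols) (a : Fin (σ.arity s) → A.carrier), (∀ i, a i ∈ B) → A.op s a ∈ B

/-- `B` absorbs `A` with respect to the term `t`. -/
def AbsorbsWith {σ : Signature} (A : UAlgebra σ) (B : Set A.carrier) {n : ℕ} (t : Term σ n) : Prop :=
  ∀ (k : Fin n) (a : Fin n → A.carrier), (∀ i, i ≠ k → a i ∈ B) → t.eval A a ∈ B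

/-- `C` absorbs the subalgebra with universe `B` (inside the ambient algebra `A`)
with respect to the term `t`. -/
def AbsorbsWithIn {σ : Signature} (A : UAlgebra σ) (B C : Set A.carrier) {n : ℕ}
    (t : Term σ n) : Prop :=
  ∀ (k : Fin n) (a : Fin n → A.carrier), (∀ i, a i ∈ B) → (∀ i, i ≠ k → a i ∈ C) →
    t.eval A a ∈ C

/-- `B` is an absorbing subalgebra (subuniverse) of `A`. -/
def Absorbing {σ : Signature} (A : UAlgebra σ) (B : Set A.carrier) : Prop :=
  Subuniverse A B ∧ ∃ (n : ℕ) (t : Term σ n), AbsorbsWith A B t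

/-- `B` is a proper absorbing subalgebra of `A`: `∅ ≠ B ≠ A`. -/
def ProperAbsorbing {σ : Signature} (A : UAlgebra σ) (B : Set A.carrier) : Prop :=
  Absorbing A B ∧ B.Nonempty ∧ B ≠ Set.univ

/-- `C` is a minimal absorbing subalgebra of `A`. -/
def MinAbsorbing {σ : Signature} (A : UAlgebra σ) (C : Set A.carrier) : Prop :=
  Absorbing A C ∧ C.Nonempty ∧ ∀ C' ⊆ C, Absorbing A C' → C'.Nonempty → C' = C

/-- All (basic, equivalently term) operations of `A` are idempotent. -/
def Idempotent {σ : Signature} (A : UAlgebra σ) : Prop :=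
  ∀ (s : σ.symbols) (a : A.carrier), A.op s (fun _ => a) = a

/-- `t` is a Taylor term of the algebra `A`. -/
def IsTaylorTerm {σ : Signature} (A : UAlgebra σ) {k : ℕ} (t : Term σ k) : Prop :=
  (∀ a : A.carrier, t.eval A (fun _ => a) = a) ∧
  ∀ j : Fin k, ∃ u v : Fin k → Fin 2, u j = 0 ∧ v j = 1 ∧
    ∀ x : Fin 2 → A.carrier, t.eval A (fun i => x (u i)) = t.eval A (fun i => x (v i))

/-- The product of two algebras of the same signature. -/
def UAlgebra.prod {σ : Signature} (A B : UAlgebra σ) : UAlgebra σ where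
  carrier := A.carrier × B.carrier
  op s x := (A.op s fun i => (x i).1, B.op s fun i => (x i).2)

/-- The `k`-th power of an algebra. -/
def UAlgebra.pow {σ : Signature} (A : UAlgebra σ) (k : ℕ) : UAlgebra σ where
  carrier := Fin k → A.carrier
  op s x := fun j => A.op s fun i => x i j

/-- `R ⊆ A × B` is subdirect: both projections are onto. -/
def Subdirect2 {α β : Type} (R : Set (α × β)) : Prop :=
  (∀ a, ∃ b, (a, b) ∈ R) ∧ ∀ b, ∃ a, (a, b) ∈ R

/-- `a` and `a'` are linked in `R` (connected in the bipartite graph of `R`). -/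
def LinkedPair {α β : Type} (R : Set (α × β)) (a a' : α) : Prop :=
  Relation.ReflTransGen (fun x y => ∃ b, (x, b) ∈ R ∧ (y, b) ∈ R) a a'

/-- `R` is linked: any two elements of the projection of `R` to the first
coordinate are `R`-linked. -/
def IsLinked {α β : Type} (R : Set (α × β)) : Prop :=
  ∀ a a', (∃ b, (a, b) ∈ R) → (∃ b, (a', b) ∈ R) → LinkedPair R a a'

/-- Cyclic shift of a `k`-tuple. -/
def cycShift {α : Type} {k : ℕ} (x : Fin k → α) : Fin k → α := fun i =>
  x ⟨(i.val + 1) % k, Nat.mod_lt _ (Nat.lt_of_le_of_lt (Nat.zero_le _) i.isLt)⟩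

/-- `t` is a cyclic term of `A`: idempotent and invariant under cyclic shift. -/
def IsCyclicTerm {σ : Signature} (A : UAlgebra σ) {k : ℕ} (t : Term σ k) : Prop :=
  (∀ a : A.carrier, t.eval A (fun _ => a) = a) ∧
  ∀ x : Fin k → A.carrier, t.eval A x = t.eval A (cycShift x)


/-- A walk with `L` "forks" in the bipartite graph of `S`, from `a` to `a'`. -/
def Wk {α β : Type} (S : Set (α × β)) (L : ℕ) (a a' : α) : Prop :=
  ∃ (f : ℕ → α) (g : ℕ → β), f 0 = a ∧ f L = a' ∧
    ∀ m, m < L → (f m, g m) ∈ S ∧ (f (m + 1), g m) ∈ S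

lemma wk_linked {α β : Type} {S : Set (α × β)} {L : ℕ} {a a' : α} (h : Wk S L a a') :
    LinkedPair S a a' := by
  obtain ⟨f, g, h0, hL, hfork⟩ := h
  subst h0; subst hL
  induction L with
  | zero => exact Relation.ReflTransGen.refl
  | succ L ih =>
    exact (ih (fun m hm => hfork m (Nat.lt_succ_of_lt hm))).tail
      ⟨g L, (hfork L (Nat.lt_succ_self L)).1, (hfork L (Nat.lt_succ_self L)).2⟩

lemma linked_wk {α β : Type} {S : Set (α × β)} {a a' : α} (b0 : β)
    (h : LinkedPair S a a') : ∃ L, Wk S L a a' := by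
  induction h with
  | refl =>
    exact ⟨0, fun _ => a, fun _ => b0, rfl, rfl, fun m hm => absurd hm (Nat.not_lt_zero m)⟩
  | @tail c c' _ hstep ih =>
    obtain ⟨L, f, g, h0, hL, hfork⟩ := ih
    obtain ⟨b, hb1, hb2⟩ := hstep
    refine ⟨L + 1, fun m => if m = L + 1 then c' else f m,
      fun m => if m = L then b else g m, ?_, ?_, ?_⟩
    · simp only [if_neg (by omega : ¬ (0 = L + 1))]; exact h0
    · simp
    · intro m hm
      rcases Nat.lt_succ_iff_lt_or_eq.mp hm with hm' | hm'
      · have h1 : m ≠ L + 1 := by omega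
        have h2 : m + 1 ≠ L + 1 := by omega
        have h3 : m ≠ L := by omega
        simpa [h1, h2, h3] using hfork m hm'
      · subst hm'
        have h1 : m ≠ m + 1 := by omega
        simp only [if_neg h1, if_pos rfl, hL]
        exact ⟨hb1, hb2⟩

lemma wk_const {α β : Type} {S : Set (α × β)} {x : α} {b : β} (hb : (x, b) ∈ S) (L : ℕ) :
    Wk S L x x :=
  ⟨fun _ => x, fun _ => b, rfl, rfl, fun _ _ => ⟨hb, hb⟩⟩

lemma prod_eval {σ : Signature} (A B : UAlgebra σ) {n : ℕ} (u : Term σ n)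
    (x : Fin n → (A.prod B).carrier) :
    u.eval (A.prod B) x = (u.eval A (fun i => (x i).1), u.eval B (fun i => (x i).2)) := by
  induction u with
  | var i => rfl
  | app s ts ih =>
    show (A.prod B).op s (fun j => Term.eval (A.prod B) (ts j) x) = _
    rw [show (fun j => Term.eval (A.prod B) (ts j) x)
        = fun j => (Term.eval A (ts j) (fun i => (x i).1),
            Term.eval B (ts j) (fun i => (x i).2)) from funext fun j => ih j]
    rfl

lemma term_idem {σ : Signature} {A : UAlgebra σ} (hI : Idempotent A) {n : ℕ}
    (u : Term σ n) (a : A.carrier) : u.eval A (fun _ => a) = a := by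
  induction u with
  | var i => rfl
  | app s ts ih =>
    show A.op s (fun j => (ts j).eval A (fun _ => a)) = a
    rw [show (fun j => (ts j).eval A (fun _ => a)) = fun _ => a from funext fun j => ih j]
    exact hI s a

lemma wk_comb {σ : Signature} (A B : UAlgebra σ)
    (R E : Set (A.carrier × B.carrier)) (hER : E ⊆ R)
    {n : ℕ} (s : Term σ n) (habs : AbsorbsWithIn (A.prod B) R E s)
    (j : Fin n) (c d : Fin n → A.carrier) (L : ℕ)
    (hEw : ∀ i, i ≠ j → Wk E L (c i) (d i)) (hRw : Wk R L (c j) (d j)) :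
    Wk E L (s.eval A c) (s.eval A d) := by
  have H : ∀ i : Fin n, ∃ (f : ℕ → A.carrier) (g : ℕ → B.carrier), f 0 = c i ∧ f L = d i ∧
      ∀ m, m < L → (((f m, g m) ∈ R ∧ (f (m + 1), g m) ∈ R) ∧
        (i ≠ j → (f m, g m) ∈ E ∧ (f (m + 1), g m) ∈ E)) := by
    intro i
    by_cases hij : i = j
    · subst hij
      obtain ⟨f, g, h0, hL, hf⟩ := hRw
      exact ⟨f, g, h0, hL, fun m hm => ⟨hf m hm, fun h => absurd rfl h⟩⟩
    · obtain ⟨f, g, h0, hL, hf⟩ := hEw i hij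
      exact ⟨f, g, h0, hL, fun m hm =>
        ⟨⟨hER (hf m hm).1, hER (hf m hm).2⟩, fun _ => hf m hm⟩⟩
  choose f g h0 hL hf using H
  refine ⟨fun m => s.eval A (fun i => f i m), fun m => s.eval B (fun i => g i m), ?_, ?_, ?_⟩
  · exact congrArg _ (funext fun i => h0 i)
  · exact congrArg _ (funext fun i => hL i)
  · intro m hm
    constructor
    · have := habs j (fun i => (f i m, g i m)) (fun i => (hf i m hm).1.1)
        (fun i hi => ((hf i m hm).2 hi).1)
      erw [prod_eval] at this; exact this
    · have := habs j (fun i => (f i (m + 1), g i m)) (fun i => (hf i m hm).1.2)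
        (fun i hi => ((hf i m hm).2 hi).2)
      erw [prod_eval] at this; exact this

/-- Let `A`, `B` be finite algebras in a Taylor variety, `R` a
subdirect subuniverse of `A × B` and `E` an absorbing subalgebra of `R`. If `R`
is linked then `E` is linked. -/
theorem absorbing_of_linked_is_linked {σ : Signature} (A B : UAlgebra σ)
    [Fintype A.carrier] [Fintype B.carrier]
    (hIA : Idempotent A) (hIB : Idempotent B)
    {k : ℕ} (t : Term σ k) (hTA : IsTaylorTerm A t) (hTB : IsTaylorTerm B t)
    (R : Set (A.carrier × B.carrier)) (hR : Subuniverse (A.prod B) R)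
    (hsub : Subdirect2 R)
    (E : Set (A.carrier × B.carrier)) (hE : Subuniverse (A.prod B) E) (hER : E ⊆ R)
    {n : ℕ} (s : Term σ n) (habs : AbsorbsWithIn (A.prod B) R E s)
    (hlink : IsLinked R) :
    IsLinked E := by
  rintro a a' ⟨ba, haE⟩ ⟨ba', ha'E⟩
  have haR : (a, ba) ∈ R := hER haE
  have ha'R : (a', ba') ∈ R := hER ha'E
  obtain ⟨L0, hRw⟩ := linked_wk ba (hlink a a' ⟨ba, haR⟩ ⟨ba', ha'R⟩)
  have key : ∀ m, m ≤ n →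
      LinkedPair E a (s.eval A (fun i => if i.val < m then a' else a)) := by
    intro m
    induction m with
    | zero =>
      intro _
      rw [show (fun i : Fin n => if i.val < 0 then a' else a) = fun _ => a from
        funext fun i => if_neg (Nat.not_lt_zero _), term_idem hIA s a]
      exact Relation.ReflTransGen.refl
    | succ m ih =>
      intro hm
      have hmn : m < n := hm
      have step : Wk E L0 (s.eval A (fun i => if i.val < m then a' else a))
          (s.eval A (fun i => if i.val < m + 1 then a' else a)) := by
        refine wk_comb A B R E hER s habs ⟨m, hmn⟩ _ _ L0 ?_ ?_
        · intro i hi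
          have hine : i.val ≠ m := fun h => hi (Fin.ext h)
          by_cases hlt : i.val < m
          · rw [if_pos hlt, if_pos (by omega : i.val < m + 1)]
            exact wk_const ha'E L0
          · rw [if_neg hlt, if_neg (by omega : ¬ i.val < m + 1)]
            exact wk_const haE L0
        · show Wk R L0 (if m < m then a' else a) (if m < m + 1 then a' else a)
          rw [if_neg (lt_irrefl m), if_pos (Nat.lt_succ_self m)]
          exact hRw
      exact (ih (le_of_lt hmn)).trans (wk_linked step)
  have h1 := key n le_rfl
  rwa [show (fun i : Fin n => if i.val < n then a' else a) = fun _ => a' from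
    funext fun i => if_pos i.isLt, term_idem hIA s a'] at h1
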